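/- Let G be a directed graph with unique source s and unique sink t in which every vertex lies on some s-t path. If u is the k-th proper ancestor of v in the s-dominator tree (i.e., u = dom_s(v,k)), then the vertex w = dom_t(u,k) (the k-th proper ancestor of u in the t-dominator tree, defaulting to t if u has fewer than k strict t-dominators) t-dominates v; moreover, v does not t-dominate u unless v = w. -/

import Mathlib

namespace FD

variable {V : Type*}

/-- A walk: nonempty vertex sequence with consecutive pairs edges. -/
def IsWalk (E : V → V → Prop) (l : List V) : Prop := l ≠ [] ∧ l.Chain' E

/-- A walk from `s` to `t`. -/
def IsWalkFromTo (E : V → V → Prop) (s t : V) (l : List V) : Prop :=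
  IsWalk E l ∧ l.head? = some s ∧ l.getLast? = some t

/-- A path from `s` to `t`: a walk with no repeated vertices. -/
def IsPathFromTo (E : V → V → Prop) (s t : V) (l : List V) : Prop :=
  IsWalkFromTo E s t l ∧ l.Nodup

/-- `s` is the unique source: a vertex has no incoming edge iff it is `s`. -/
def UniqueSource (E : V → V → Prop) (s : V) : Prop := ∀ v, (¬ ∃ u, E u v) ↔ v = s

/-- `t` is the unique sink: a vertex has no outgoing edge iff it is `t`. -/
def UniqueSink (E : V → V → Prop) (t : V) : Prop := ∀ v, (¬ ∃ w, E v w) ↔ v = t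

/-- `u` s-dominates `v`: every `s`-`v` path contains `u`. -/
def SDom (E : V → V → Prop) (s u v : V) : Prop := ∀ p, IsPathFromTo E s v p → u ∈ p

/-- `u` t-dominates `v`: every `v`-`t` path contains `u`. -/
def TDom (E : V → V → Prop) (t u v : V) : Prop := ∀ p, IsPathFromTo E v t p → u ∈ p

/-- `l` is the chain of s-dominators of `v`, listed in dominance order from `s` to `v`. -/
def IsSDomChain (E : V → V → Prop) (s v : V) (l : List V) : Prop :=
  l.Nodup ∧ (∀ u, u ∈ l ↔ SDom E s u v) ∧
    l.Chain' (fun a b => SDom E s a b) ∧ l.head? = some s ∧ l.getLast? = some v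

/-- `l` is the chain of t-dominators of `v`, listed in order from `v` to `t`. -/
def IsTDomChain (E : V → V → Prop) (t v : V) (l : List V) : Prop :=
  l.Nodup ∧ (∀ u, u ∈ l ↔ TDom E t u v) ∧
    l.Chain' (fun a b => TDom E t b a) ∧ l.head? = some v ∧ l.getLast? = some t

/-- `x = ext(v)`: the s-dominator chain of `v` (from `s` to `v`) concatenated with the
t-dominator chain of `v` (from `v` to `t`), with the duplicate `v` removed. -/
def IsExtension (E : V → V → Prop) (s t v : V) (x : List V) : Prop :=
  ∃ ds dt, IsSDomChain E s v ds ∧ IsTDomChain E t v dt ∧ x = ds ++ dt.tail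

/-- `P` is a `C`-walk cover: a set of `s`-`t` walks such that every vertex of `C`
lies on some walk of `P`. -/
def WalkCover (E : V → V → Prop) (s t : V) (C : Set V) (P : Set (List V)) : Prop :=
  (∀ w ∈ P, IsWalkFromTo E s t w) ∧ ∀ c ∈ C, ∃ w ∈ P, c ∈ w

/-- `X` is a `C`-safe sequence: every `C`-walk cover contains a walk having `X`
as a subsequence. -/
def SafeSeq (E : V → V → Prop) (s t : V) (C : Set V) (X : List V) : Prop :=
  ∀ P, WalkCover E s t C P → ∃ w ∈ P, X.Sublist w

/-- The list of edges traversed by a walk, in order (with multiplicity). -/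
def walkEdges (l : List V) : List (V × V) := l.zip l.tail

/-- `idoms` is the immediate s-dominator (parent in the s-dominator tree) function:
`idoms s = s`, and for `v ≠ s`, `idoms v` is a strict s-dominator of `v` that is
s-dominated by every strict s-dominator of `v`. -/
def IsIdomS (E : V → V → Prop) (s : V) (idoms : V → V) : Prop :=
  idoms s = s ∧ ∀ v, v ≠ s → idoms v ≠ v ∧ SDom E s (idoms v) v ∧
    ∀ u, u ≠ v → SDom E s u v → SDom E s u (idoms v)

/-- Immediate t-dominator (parent in the t-dominator tree) function. -/
def IsIdomT (E : V → V → Prop) (t : V) (idomt : V → V) : Prop :=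
  idomt t = t ∧ ∀ v, v ≠ t → idomt v ≠ v ∧ TDom E t (idomt v) v ∧
    ∀ u, u ≠ v → TDom E t u v → TDom E t u (idomt v)

/-- In the tree with parent function `par` rooted at `root`, `c` is the unique child
of `p`. -/
def UniqueChild (par : V → V) (root c p : V) : Prop :=
  c ≠ root ∧ par c = p ∧ ∀ y, y ≠ root → par y = p → y = c

/-- A univocal path `v₁ … v_k`: in the t-dominator tree each `v_{i+1}` has `v_i`
as its unique child, and `v_k … v_1` is a path in the s-dominator tree where each
vertex but the deepest (`v_k`) has exactly one child. -/
def IsUnivocal (idoms idomt : V → V) (s t : V) (l : List V) : Prop :=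
  l ≠ [] ∧ l.Chain' (fun a b => UniqueChild idomt t a b ∧ UniqueChild idoms s b a)

/-- A maximal univocal path: not properly contained in another univocal path. -/
def IsMaximalUnivocal (idoms idomt : V → V) (s t : V) (l : List V) : Prop :=
  IsUnivocal idoms idomt s t l ∧
    ∀ l', IsUnivocal idoms idomt s t l' → l <:+: l' → l' = l

/-- `X` is a maximal safe sequence for walk covers (covering all vertices):
it is safe and no proper supersequence of it is safe. -/
def MaximalSafe (E : V → V → Prop) (s t : V) (X : List V) : Prop :=
  SafeSeq E s t Set.univ X ∧ ∀ Y, X.Sublist Y → Y ≠ X → ¬ SafeSeq E s t Set.univ Y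

/-- Edge `e` reaches edge `e'`: there is a (possibly empty) path from the head of `e`
to the tail of `e'`. -/
def EReach (E : V → V → Prop) (e e' : V × V) : Prop := Relation.ReflTransGen E e.2 e'.1

/-- `P` is a cover of the edge set `C` by `s`-`t` walks. -/
def EdgeWalkCover (E : V → V → Prop) (s t : V) (C : Set (V × V)) (P : Set (List V)) : Prop :=
  (∀ w ∈ P, IsWalkFromTo E s t w) ∧ ∀ c ∈ C, ∃ w ∈ P, c ∈ walkEdges w

/-- A `C`-safe sequence of edges: every cover of `C` by `s`-`t` walks contains a walk
traversing the edges of `S` in order. -/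
def SafeEdgeSeq (E : V → V → Prop) (s t : V) (C : Set (V × V)) (S : List (V × V)) : Prop :=
  ∀ P, EdgeWalkCover E s t C P → ∃ w ∈ P, S.Sublist (walkEdges w)

section Infra

theorem List.chain'_append {α : Type*} {R : α → α → Prop} {l₁ l₂ : List α} :
    List.Chain' R (l₁ ++ l₂) ↔ List.Chain' R l₁ ∧ List.Chain' R l₂ ∧
      ∀ x ∈ l₁.getLast?, ∀ y ∈ l₂.head?, R x y := _root_.List.isChain_append

theorem List.chain'_singleton {α : Type*} {R : α → α → Prop} (a : α) :
    List.Chain' R [a] := _root_.List.isChain_singleton a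

theorem List.chain'_reverse {α : Type*} {R : α → α → Prop} {l : List α} :
    List.Chain' R l.reverse ↔ List.Chain' (flip R) l := _root_.List.isChain_reverse

theorem List.chain'_cons {α : Type*} {R : α → α → Prop} {x y : α} {l : List α} :
    List.Chain' R (x :: y :: l) ↔ R x y ∧ List.Chain' R (y :: l) := _root_.List.isChain_cons_cons

theorem List.chain'_cons' {α : Type*} {R : α → α → Prop} {x : α} {l : List α} :
    List.Chain' R (x :: l) ↔ (∀ y ∈ l.head?, R x y) ∧ List.Chain' R l := _root_.List.isChain_cons

variable {E : V → V → Prop} {s t a b c u v x w : V} {l p q : List V}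

lemma pathSingleton : IsPathFromTo E a a [a] := by
  refine ⟨⟨⟨by simp, List.chain'_singleton a⟩, by simp, by simp⟩, by simp⟩

lemma mem_head (h : IsPathFromTo E a b p) : a ∈ p := by
  obtain ⟨⟨_, h1, _⟩, _⟩ := h
  exact List.mem_of_mem_head? (by simp [h1])

lemma mem_last (h : IsPathFromTo E a b p) : b ∈ p := by
  obtain ⟨⟨_, _, h2⟩, _⟩ := h
  exact List.mem_of_mem_getLast? (by simp [h2])

lemma path_split (h : IsPathFromTo E a b p) (hx : x ∈ p) :
    ∃ p₁ p₂, p = p₁ ++ x :: p₂ ∧ IsPathFromTo E a x (p₁ ++ [x]) ∧ IsPathFromTo E x b (x :: p₂) := by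
  obtain ⟨p₁, p₂, rfl⟩ := List.append_of_mem hx
  obtain ⟨⟨⟨hne, hch⟩, hhd, hlst⟩, hnd⟩ := h
  rw [List.chain'_append] at hch
  obtain ⟨hch1, hch2, hlink⟩ := hch
  refine ⟨p₁, p₂, rfl, ⟨⟨⟨by simp, ?_⟩, ?_, ?_⟩, ?_⟩, ⟨⟨⟨by simp, hch2⟩, by simp, ?_⟩, ?_⟩⟩
  · rw [List.chain'_append]
    exact ⟨hch1, List.chain'_singleton x, by simpa using hlink⟩
  · rcases p₁ with _ | ⟨y, p₁'⟩
    · simpa using hhd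
    · simpa using hhd
  · simp
  · exact hnd.sublist ((List.append_sublist_append_left p₁).mpr (by simp))
  · rwa [List.getLast?_append_of_ne_nil _ (by simp)] at hlst
  · exact hnd.sublist ((List.sublist_append_right p₁ _))

lemma tdom_self : TDom E t v v := fun _ hp => mem_head hp

lemma tdom_t : TDom E t t v := fun _ hp => mem_last hp

lemma tdom_eq_t (h : TDom E t a t) : a = t := by
  have := h [t] pathSingleton
  simpa using this

lemma tdom_trans (hab : TDom E t a b) (hbc : TDom E t b c) : TDom E t a c := by
  intro p hp
  obtain ⟨p₁, p₂, rfl, _, hsuf⟩ := path_split hp (hbc p hp)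
  have := hab _ hsuf
  exact List.mem_append_right p₁ this

lemma tdom_antisym (hex : ∃ p, IsPathFromTo E a t p) (hab : TDom E t a b)
    (hba : TDom E t b a) : a = b := by
  obtain ⟨p, hp⟩ := hex
  obtain ⟨p₁, p₂, rfl, hpre, hsuf⟩ := path_split hp (hba p hp)
  have haa : a ∈ b :: p₂ := hab _ hsuf
  obtain ⟨⟨_, hhd, _⟩, hnd⟩ := hp
  rcases p₁ with _ | ⟨y, p₁'⟩
  · have hba' : b = a := by simpa using hhd
    exact hba'.symm
  · have hy : y = a := by simpa using hhd
    rw [← hy] at haa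
    have hna : y ∉ p₁' ++ b :: p₂ := (List.nodup_cons.mp (by simpa using hnd)).1
    exact absurd (List.mem_append_right _ haa) hna


lemma isPathFromTo_flip {l : List V} :
    IsPathFromTo (flip E) b a l.reverse ↔ IsPathFromTo E a b l := by
  constructor
  · rintro ⟨⟨⟨hne, hch⟩, hhd, hlst⟩, hnd⟩
    refine ⟨⟨⟨by simpa using hne, ?_⟩, ?_, ?_⟩, by simpa using hnd⟩
    · exact List.chain'_reverse.mp hch
    · simpa [List.getLast?_reverse] using hlst
    · simpa [List.head?_reverse] using hhd
  · rintro ⟨⟨⟨hne, hch⟩, hhd, hlst⟩, hnd⟩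
    refine ⟨⟨⟨by simpa using hne, List.chain'_reverse.mpr hch⟩,
      by simpa [List.head?_reverse] using hlst,
      by simpa [List.getLast?_reverse] using hhd⟩, by simpa using hnd⟩

lemma sdom_flip : SDom (flip E) t u v ↔ TDom E t u v := by
  constructor
  · intro h p hp
    have := h p.reverse (isPathFromTo_flip.mpr hp)
    simpa using this
  · intro h p hp
    have hp' : IsPathFromTo E v t p.reverse :=
      isPathFromTo_flip.mp (by simpa using hp)
    have := h p.reverse hp'
    simpa using this

lemma tdom_flip : TDom (flip E) s u v ↔ SDom E s u v := by
  constructor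
  · intro h p hp
    have := h p.reverse (isPathFromTo_flip.mpr hp)
    simpa using this
  · intro h p hp
    have hp' : IsPathFromTo E s v p.reverse :=
      isPathFromTo_flip.mp (by simpa using hp)
    have := h p.reverse hp'
    simpa using this

lemma exists_path_from (hall : ∀ a : V, ∃ p, IsPathFromTo E s t p ∧ a ∈ p) (a : V) :
    ∃ p, IsPathFromTo E s a p := by
  obtain ⟨p, hp, hmem⟩ := hall a
  obtain ⟨p₁, p₂, _, hpre, _⟩ := path_split hp hmem
  exact ⟨_, hpre⟩

lemma exists_path_to (hall : ∀ a : V, ∃ p, IsPathFromTo E s t p ∧ a ∈ p) (a : V) :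
    ∃ p, IsPathFromTo E a t p := by
  obtain ⟨p, hp, hmem⟩ := hall a
  obtain ⟨p₁, p₂, _, _, hsuf⟩ := path_split hp hmem
  exact ⟨_, hsuf⟩

lemma hall_flip (hall : ∀ a : V, ∃ p, IsPathFromTo E s t p ∧ a ∈ p) :
    ∀ a : V, ∃ p, IsPathFromTo (flip E) t s p ∧ a ∈ p := by
  intro a
  obtain ⟨p, hp, hmem⟩ := hall a
  exact ⟨p.reverse, isPathFromTo_flip.mpr hp, by simpa using hmem⟩

lemma exists_path_of_walk (E : V → V → Prop) (b : V) :
    ∀ (n : ℕ) (a : V) (l : List V), l.length ≤ n → IsWalkFromTo E a b l →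
      ∃ p, IsPathFromTo E a b p ∧ ∀ x ∈ p, x ∈ l := by
  intro n
  induction n with
  | zero =>
    rintro a l hlen ⟨⟨hne, _⟩, _, _⟩
    rw [Nat.le_zero, List.length_eq_zero_iff] at hlen
    exact absurd hlen hne
  | succ n ih =>
    rintro a l hlen ⟨⟨hne, hch⟩, hhd, hlst⟩
    obtain ⟨rest, rfl⟩ : ∃ rest, l = a :: rest := by
      rcases l with _ | ⟨y, rest⟩
      · exact absurd rfl hne
      · exact ⟨rest, by simpa using (by simpa using hhd : y = a) ▸ rfl⟩
    by_cases hmem : a ∈ rest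
    · obtain ⟨r1, r2, hr⟩ := List.append_of_mem hmem
      subst hr
      have hl2 : a :: (r1 ++ a :: r2) = (a :: r1) ++ (a :: r2) := by simp
      rw [hl2] at hch hlst
      have hch' : (a :: r2).Chain' E := (List.chain'_append.mp hch).2.1
      have hlst' : (a :: r2).getLast? = some b := by
        rwa [List.getLast?_append_of_ne_nil _ (by simp)] at hlst
      have hlen' : (a :: r2).length ≤ n := by
        simp only [List.length_cons, List.length_append] at hlen ⊢
        omega
      obtain ⟨p, hp, hsub⟩ := ih a (a :: r2) hlen' ⟨⟨by simp, hch'⟩, by simp, hlst'⟩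
      refine ⟨p, hp, fun x hx => ?_⟩
      have := hsub x hx
      simp only [List.mem_cons, List.mem_append] at this ⊢
      tauto
    · rcases rest with _ | ⟨c, rest'⟩
      · have hba : b = a := by simpa using hlst.symm
        subst hba
        exact ⟨[b], pathSingleton, by simp⟩
      · have hEac : E a c := (List.chain'_cons.mp hch).1
        have hwrest : IsWalkFromTo E c b (c :: rest') :=
          ⟨⟨by simp, (List.chain'_cons.mp hch).2⟩, by simp, by simpa using hlst⟩
        obtain ⟨p, hp, hsub⟩ := ih c (c :: rest')
          (by simpa using Nat.le_of_succ_le_succ hlen) hwrest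
        have hna : a ∉ p := fun h => hmem (hsub a h)
        have hpne : p ≠ [] := hp.1.1.1
        have hhp : p.head? = some c := hp.1.2.1
        refine ⟨a :: p, ⟨⟨⟨by simp, List.chain'_cons'.mpr ⟨?_, hp.1.1.2⟩⟩, by simp, ?_⟩,
          List.nodup_cons.mpr ⟨hna, hp.2⟩⟩, ?_⟩
        · intro y hy
          rw [hhp] at hy
          exact (by simpa using hy : c = y) ▸ hEac
        · show (a :: p).getLast? = some b
          rw [show a :: p = [a] ++ p from rfl, List.getLast?_append_of_ne_nil _ hpne]
          exact hp.1.2.2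
        · intro x hx
          rcases List.mem_cons.mp hx with rfl | hx'
          · simp
          · exact List.mem_cons_of_mem a (hsub x hx')

variable {idoms idomt : V → V}

lemma isIdomS_flip {f : V → V} : IsIdomS (flip E) t f ↔ IsIdomT E t f := by
  unfold IsIdomS IsIdomT
  simp only [sdom_flip]

lemma isIdomT_flip {f : V → V} : IsIdomT (flip E) s f ↔ IsIdomS E s f := by
  unfold IsIdomS IsIdomT
  simp only [tdom_flip]

lemma sdom_self : SDom E s v v := fun _ hp => mem_last hp

lemma sdom_trans (hab : SDom E s a b) (hbc : SDom E s b c) : SDom E s a c := by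
  rw [← tdom_flip] at hab hbc ⊢
  exact tdom_trans hab hbc

lemma sdom_antisym (hex : ∃ p, IsPathFromTo E s a p) (hab : SDom E s a b)
    (hba : SDom E s b a) : a = b := by
  rw [← tdom_flip] at hab hba
  refine tdom_antisym ?_ hab hba
  obtain ⟨p, hp⟩ := hex
  exact ⟨p.reverse, isPathFromTo_flip.mpr hp⟩

lemma tdom_step (hidt : IsIdomT E t idomt) (c : V) : TDom E t (idomt c) c := by
  by_cases h : c = t
  · subst h; rw [hidt.1]; exact tdom_self
  · exact (hidt.2 c h).2.1

lemma tdom_iterate (hidt : IsIdomT E t idomt) (m : ℕ) (b : V) :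
    TDom E t (idomt^[m] b) b := by
  induction m with
  | zero => simpa using tdom_self
  | succ m ih =>
    rw [Function.iterate_succ_apply']
    exact tdom_trans (tdom_step hidt _) ih

lemma sdom_iterate (hids : IsIdomS E s idoms) (m : ℕ) (b : V) :
    SDom E s (idoms^[m] b) b := by
  have h := tdom_iterate (E := flip E) (isIdomT_flip.mpr hids) m b
  rwa [tdom_flip] at h

lemma GB (hall : ∀ a : V, ∃ p, IsPathFromTo E s t p ∧ a ∈ p)
    (hids : IsIdomS E s idoms) (hidt : IsIdomT E t idomt)
    (hv : v ≠ s) (ha : TDom E t a (idoms v)) : TDom E t (idomt a) v := by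
  by_cases hat : a = t
  · subst hat; rw [hidt.1]; exact tdom_t
  obtain ⟨hne_a, hwa, -⟩ := hidt.2 a hat
  obtain ⟨hxv_ne, hxv, hxuniv⟩ := hids.2 v hv
  intro p hp
  by_contra hwp
  have hvp : v ∈ p := mem_head hp
  obtain ⟨pt, rfl⟩ : ∃ pt, p = v :: pt := by
    rcases p with _ | ⟨v0, pt⟩
    · exact absurd rfl hp.1.1.1
    · exact ⟨pt, by rw [(by simpa using hp.1.2.1 : v0 = v)]⟩
  have hchp : (v :: pt).Chain' E := hp.1.1.2
  have hlstp : (v :: pt).getLast? = some t := hp.1.2.2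
  have key : ∀ q2, IsPathFromTo E (idoms v) v ((idoms v) :: q2) → idomt a ∈ (idoms v) :: q2 := by
    intro q2 hqsuf
    have hW : IsWalkFromTo E (idoms v) t (((idoms v) :: q2) ++ pt) := by
      refine ⟨⟨by simp, ?_⟩, by simp, ?_⟩
      · refine List.chain'_append.mpr ⟨hqsuf.1.1.2, (List.chain'_cons'.mp hchp).2, ?_⟩
        intro y hy z hz
        have hyv : y = v := by
          rw [hqsuf.1.2.2] at hy
          simpa using hy.symm
        subst hyv
        exact (List.chain'_cons'.mp hchp).1 z hz
      · rcases pt with _ | ⟨z, pt'⟩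
        · have : v = t := by simpa using hlstp
          simpa [this] using hqsuf.1.2.2
        · rw [List.getLast?_append_of_ne_nil _ (by simp)]
          simpa using hlstp
    obtain ⟨r, hr, hrsub⟩ := exists_path_of_walk E t _ _ _ le_rfl hW
    have har : a ∈ r := ha r hr
    obtain ⟨r1, r2, hreq, -, hrsuf⟩ := path_split hr har
    have hwr : idomt a ∈ r := by
      rw [hreq]; exact List.mem_append_right _ (hwa _ hrsuf)
    rcases List.mem_append.mp (hrsub _ hwr) with h1 | h2
    · exact h1
    · exact absurd (List.mem_cons_of_mem v h2) hwp
  have hsdom : SDom E s (idomt a) v := by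
    intro q hq
    obtain ⟨q1, q2, hqeq, -, hqsuf⟩ := path_split hq (hxv q hq)
    rw [hqeq]
    exact List.mem_append_right _ (key q2 hqsuf)
  have hw_ne_v : idomt a ≠ v := fun h => hwp (h ▸ List.mem_cons_self)
  have hswx : SDom E s (idomt a) (idoms v) := hxuniv _ hw_ne_v hsdom
  obtain ⟨q0, hq0⟩ := exists_path_from hall v
  obtain ⟨q1, q2, hq0eq, hq0pre, hq0suf⟩ := path_split hq0 (hxv q0 hq0)
  have hw1 : idomt a ∈ (idoms v) :: q2 := key q2 hq0suf
  have hw2 : idomt a ∈ q1 ++ [idoms v] := hswx _ hq0pre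
  have hwx : idomt a = idoms v := by
    rcases List.mem_append.mp hw2 with h | h
    · have hnd := hq0.2
      rw [hq0eq] at hnd
      exact absurd rfl ((List.nodup_append.mp hnd).2.2 _ h _ hw1)
    · simpa using h
  have hax : a = idoms v := tdom_antisym (exists_path_to hall a) ha (hwx ▸ hwa)
  exact hne_a (hwx.trans hax.symm)

lemma main1 (hall : ∀ a : V, ∃ p, IsPathFromTo E s t p ∧ a ∈ p)
    (hids : IsIdomS E s idoms) (hidt : IsIdomT E t idomt) :
    ∀ (k : ℕ) (v : V), (∀ i < k, idoms^[i] v ≠ s) →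
      TDom E t (idomt^[k] (idoms^[k] v)) v := by
  intro k
  induction k with
  | zero => intro v _; simpa using tdom_self
  | succ k ih =>
    intro v hanc
    have hvs : v ≠ s := by simpa using hanc 0 (Nat.succ_pos k)
    have hanc' : ∀ i < k, idoms^[i] (idoms v) ≠ s := fun i hi => by
      rw [← Function.iterate_succ_apply]
      exact hanc (i + 1) (Nat.succ_lt_succ hi)
    have hIH := ih (idoms v) hanc'
    have hGB := GB hall hids hidt hvs hIH
    rw [Function.iterate_succ_apply idoms, Function.iterate_succ_apply' idomt]
    exact hGB

lemma tdom_chain [Fintype V] (hall : ∀ a : V, ∃ p, IsPathFromTo E s t p ∧ a ∈ p)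
    (hidt : IsIdomT E t idomt) (h : TDom E t v u) : ∃ j, idomt^[j] u = v := by
  suffices H : ∀ (n : ℕ) (u : V), Set.ncard {x | TDom E t x u} ≤ n → TDom E t v u →
      ∃ j, idomt^[j] u = v from H _ u le_rfl h
  intro n
  induction n with
  | zero =>
    intro u hc h
    exfalso
    have hpos : 0 < Set.ncard {x | TDom E t x u} :=
      (Set.ncard_pos (Set.toFinite _)).mpr ⟨u, tdom_self⟩
    omega
  | succ n ih =>
    intro u hc h
    by_cases hvu : v = u
    · exact ⟨0, by simp [hvu]⟩
    have hut : u ≠ t := by rintro rfl; exact hvu (tdom_eq_t h)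
    obtain ⟨hne, hstep, huniv⟩ := hidt.2 u hut
    have h' : TDom E t v (idomt u) := huniv v hvu h
    have hsub : {x | TDom E t x (idomt u)} ⊆ {x | TDom E t x u} \ {u} := by
      intro y hy
      refine ⟨tdom_trans hy hstep, ?_⟩
      simp only [Set.mem_singleton_iff]
      rintro rfl
      exact hne (tdom_antisym (exists_path_to hall _) hstep hy)
    have hcard : Set.ncard {x | TDom E t x (idomt u)} ≤ n := by
      have h1 := Set.ncard_le_ncard hsub (Set.toFinite _)
      have h2 := Set.ncard_diff_singleton_lt_of_mem
        (show u ∈ {x | TDom E t x u} from tdom_self) (Set.toFinite _)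
      omega
    obtain ⟨j, hj⟩ := ih (idomt u) hcard h'
    exact ⟨j + 1, by rw [Function.iterate_succ_apply]; exact hj⟩

end Infra

/-- if `u` is the `k`-th proper ancestor of `v` in the s-dominator tree,
then `dom_t(u,k)` t-dominates `v`, and `v` does not t-dominate `u` unless `v = dom_t(u,k)`. -/
theorem stmt1 {V : Type*} [Fintype V] (E : V → V → Prop) (s t : V)
    (hs : UniqueSource E s) (ht : UniqueSink E t)
    (hall : ∀ a : V, ∃ p, IsPathFromTo E s t p ∧ a ∈ p)
    (idoms idomt : V → V) (hids : IsIdomS E s idoms) (hidt : IsIdomT E t idomt)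
    (u v : V) (k : ℕ) (hk : 0 < k)
    (hanc : ∀ i < k, idoms^[i] v ≠ s)
    (hu : u = idoms^[k] v) :
    TDom E t (idomt^[k] u) v ∧ (TDom E t v u → v = idomt^[k] u) := by
  subst hu
  have h1 : TDom E t (idomt^[k] (idoms^[k] v)) v := main1 hall hids hidt k v hanc
  refine ⟨h1, ?_⟩
  intro hvu
  by_cases hvt : v = t
  · rw [hvt] at h1 ⊢
    exact (tdom_eq_t h1).symm
  obtain ⟨j, hj⟩ := tdom_chain hall hidt hvu
  rcases le_or_gt k j with hkj | hjk
  · have hjeq : idomt^[j - k] (idomt^[k] (idoms^[k] v)) = v := by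
      rw [← Function.iterate_add_apply, show j - k + k = j from by omega]
      exact hj
    have hvw : TDom E t v (idomt^[k] (idoms^[k] v)) := by
      have h2 := tdom_iterate hidt (j - k) (idomt^[k] (idoms^[k] v))
      rwa [hjeq] at h2
    exact tdom_antisym (exists_path_to hall v) hvw h1
  · exfalso
    have hvt' : ∀ i < j, idomt^[i] (idoms^[k] v) ≠ t := by
      intro i hi heq
      exact hvt (by
        rw [← hj, show j = (j - i) + i from by omega, Function.iterate_add_apply, heq,
          Function.iterate_fixed hidt.1])
    have hdual := main1 (E := flip E) (s := t) (t := s) (idoms := idomt) (idomt := idoms)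
      (hall_flip hall) (isIdomS_flip.mpr hidt) (isIdomT_flip.mpr hids) j (idoms^[k] v) hvt'
    rw [hj, tdom_flip] at hdual
    have hup : SDom E s (idoms^[k] v) (idoms^[j] v) := by
      rw [show k = (k - j) + j from by omega, Function.iterate_add_apply]
      exact sdom_iterate hids _ _
    have hy : idoms^[k] v = idoms^[j] v :=
      sdom_antisym (exists_path_from hall _) hup hdual
    have hys : idoms^[j] v ≠ s := hanc j hjk
    obtain ⟨hyne, hystep, -⟩ := hids.2 (idoms^[j] v) hys
    have hcyc : idoms^[k - j] (idoms^[j] v) = idoms^[j] v := by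
      rw [← Function.iterate_add_apply, show k - j + j = k from by omega]
      exact hy
    have hysd : SDom E s (idoms^[j] v) (idoms (idoms^[j] v)) := by
      have h2 := sdom_iterate hids (k - j - 1) (idoms (idoms^[j] v))
      have heq2 : idoms^[k - j - 1] (idoms (idoms^[j] v)) = idoms^[j] v := by
        rw [← Function.iterate_succ_apply, show (k - j - 1).succ = k - j from by omega]
        exact hcyc
      rwa [heq2] at h2
    exact hyne (sdom_antisym (exists_path_from hall _) hystep hysd)


end FD
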